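/- Let f : ℝ^n → ℝ ∪ {+∞} be proper, lower semicontinuous, coercive, and uniformly quasiconvex with modulus φ on a closed convex set C ⊆ dom f, let {x^k}_{k≥0} be a HiPPA sequence for f on C with order p = 2 and parameters γ_k ∈ (γ_min, γ_max), and let x̄ be the unique global minimizer of f on C. Then for every k ≥ 0: γ_k·φ(‖x̄ − x^{k+1}‖) + ‖x̄ − x^{k+1}‖² ≤ ‖x̄ − x^k‖·‖x̄ − x^{k+1}‖. -/

import Mathlib

noncomputable section

open Set Filter

/-- `φ : [0,∞) → [0,∞]` is a modulus: increasing and vanishing only at `0`. -/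
def IsModulus (φ : ℝ → EReal) : Prop :=
  (∀ ⦃s t : ℝ⦄, 0 ≤ s → s ≤ t → φ s ≤ φ t) ∧ φ 0 = 0 ∧ (∀ t : ℝ, 0 < t → 0 < φ t)

/-- `f` is uniformly quasiconvex on `C` with modulus `φ`. -/
def UnifQuasiconvexOn {E : Type*} [NormedAddCommGroup E] [NormedSpace ℝ E]
    (C : Set E) (φ : ℝ → EReal) (f : E → EReal) : Prop :=
  ∀ ⦃x⦄, x ∈ C → ∀ ⦃y⦄, y ∈ C → ∀ ⦃l : ℝ⦄, l ∈ Set.Icc (0 : ℝ) 1 →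
    f (l • x + (1 - l) • y) + ((l * (1 - l) : ℝ) : EReal) * φ ‖x - y‖ ≤ max (f x) (f y)

/-- `f(x) → +∞` as `‖x‖ → +∞`. -/
def Coercive {E : Type*} [NormedAddCommGroup E] (f : E → EReal) : Prop :=
  ∀ M : ℝ, ∃ R : ℝ, ∀ x : E, R ≤ ‖x‖ → (M : EReal) < f x

/-- The high-order proximal set `prox_{f,γ}^p(C, x) = argmin_{y ∈ C} (f(y) + (1/(pγ))‖x − y‖^p)`. -/
def HOProx {E : Type*} [NormedAddCommGroup E]
    (f : E → EReal) (C : Set E) (p γ : ℝ) (x : E) : Set E :=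
  {y | y ∈ C ∧ ∀ z ∈ C,
    f y + ((1 / (p * γ) * ‖x - y‖ ^ p : ℝ) : EReal)
      ≤ f z + ((1 / (p * γ) * ‖x - z‖ ^ p : ℝ) : EReal)}

/-- For a HiPPA sequence with order `p = 2` and the unique global
minimizer `x̄` of `f` on `C`, for every `k`:
`γ_k·φ(‖x̄ − x^{k+1}‖) + ‖x̄ − x^{k+1}‖² ≤ ‖x̄ − x^k‖·‖x̄ − x^{k+1}‖`. -/
theorem statement_15 (n : ℕ) (f : EuclideanSpace ℝ (Fin n) → EReal)
    (hproper : ∃ x, f x ≠ ⊤) (hbot : ∀ x, f x ≠ ⊥)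
    (hlsc : LowerSemicontinuous f) (hcoer : Coercive f)
    (C : Set (EuclideanSpace ℝ (Fin n)))
    (hCclosed : IsClosed C) (hCconv : Convex ℝ C)
    (hdom : ∀ x ∈ C, f x ≠ ⊤)
    (φ : ℝ → EReal) (hφ : IsModulus φ)
    (hquasi : UnifQuasiconvexOn C φ f)
    (γmin γmax : ℝ) (hγmin : 0 < γmin) (hγ : γmin < γmax)
    (x : ℕ → EuclideanSpace ℝ (Fin n)) (γ : ℕ → ℝ)
    (hx0 : x 0 ∈ C)
    (hγk : ∀ k, γ k ∈ Set.Ioo γmin γmax)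
    (hstep : ∀ k, x (k + 1) ∈ HOProx f C 2 (γ k) (x k))
    (xb : EuclideanSpace ℝ (Fin n)) (hxbC : xb ∈ C)
    (hxbmin : ∀ y ∈ C, f xb ≤ f y)
    (hxbuniq : ∀ z ∈ C, (∀ y ∈ C, f z ≤ f y) → z = xb) :
    ∀ k : ℕ,
      ((γ k : ℝ) : EReal) * φ ‖xb - x (k + 1)‖
          + ((‖xb - x (k + 1)‖ ^ 2 : ℝ) : EReal)
        ≤ ((‖xb - x k‖ * ‖xb - x (k + 1)‖ : ℝ) : EReal) := by
  intro k
  obtain ⟨hγ1, _⟩ := hγk k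
  have hγpos : 0 < γ k := hγmin.trans hγ1
  obtain ⟨hyC, hopt⟩ := hstep k
  set y := x (k + 1) with hydef
  set xk := x k with hxkdef
  set d := ‖xb - y‖ with hddef
  have hd0 : 0 ≤ d := norm_nonneg _
  have hmax : max (f xb) (f y) = f y := max_eq_right (hxbmin y hyC)
  have hfy : f y = (((f y).toReal : ℝ) : EReal) :=
    (EReal.coe_toReal (hdom y hyC) (hbot y)).symm
  set fy := (f y).toReal with hfydef
  rcases eq_or_lt_of_le hd0 with hdz | hdpos
  · rw [← hdz, hφ.2.1]
    have h1 : ((γ k : ℝ) : EReal) * 0 = 0 := mul_zero _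
    rw [h1]
    norm_num [← hdz]
  -- main case : d > 0
  have hφdpos : 0 < φ d := hφ.2.2 d hdpos
  have hφbot : φ d ≠ ⊥ := ne_bot_of_gt hφdpos
  have hφtop : φ d ≠ ⊤ := by
    intro htop
    have hl : (1/2 : ℝ) ∈ Set.Icc (0:ℝ) 1 := by norm_num
    have hq := hquasi hxbC hyC hl
    rw [hmax, htop] at hq
    have hzC : ((1/2 : ℝ)) • xb + ((1 - 1/2 : ℝ)) • y ∈ C :=
      hCconv hxbC hyC (by norm_num) (by norm_num) (by norm_num)
    have hmt : (((1/2 * (1 - 1/2) : ℝ)) : EReal) * ⊤ = ⊤ :=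
      EReal.coe_mul_top_of_pos (by norm_num)
    rw [hmt, EReal.add_top_of_ne_bot (hbot _)] at hq
    exact (hdom y hyC) (top_le_iff.mp hq)
  have hr : φ d = (((φ d).toReal : ℝ) : EReal) := (EReal.coe_toReal hφtop hφbot).symm
  set r := (φ d).toReal with hrdef
  have hrpos : 0 < r := by
    have := hφdpos
    rw [hr] at this
    exact_mod_cast this
  set t : ℝ := inner ℝ (xk - y) (xb - y) with htdef
  have h2γ : (0:ℝ) < 2 * γ k := by linarith
  -- key inequality for every l ∈ (0,1)
  have key : ∀ l : ℝ, 0 < l → l < 1 →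
      2 * γ k * (l * (1 - l) * r) ≤ -(2 * (l * t)) + l ^ 2 * d ^ 2 := by
    intro l hl0 hl1
    have hzC : l • xb + (1 - l) • y ∈ C :=
      hCconv hxbC hyC hl0.le (by linarith) (by ring)
    set z := l • xb + (1 - l) • y with hzdef
    have hfz : f z = (((f z).toReal : ℝ) : EReal) :=
      (EReal.coe_toReal (hdom z hzC) (hbot z)).symm
    set fz := (f z).toReal with hfzdef
    have hq := hquasi hxbC hyC ⟨hl0.le, hl1.le⟩
    rw [hmax, hr, hfz, hfy] at hq
    have hq' : fz + l * (1 - l) * r ≤ fy := by exact_mod_cast hq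
    have hp := hopt z hzC
    rw [hfz, hfy] at hp
    have hp' : fy + 1 / (2 * γ k) * ‖xk - y‖ ^ (2:ℝ)
        ≤ fz + 1 / (2 * γ k) * ‖xk - z‖ ^ (2:ℝ) := by exact_mod_cast hp
    have hrp : ∀ a : ℝ, a ^ (2:ℝ) = a ^ (2:ℕ) := by
      intro a
      rw [show ((2:ℝ)) = ((2:ℕ) : ℝ) by norm_num, Real.rpow_natCast]
    rw [hrp, hrp] at hp'
    have hzsub : xk - z = (xk - y) - l • (xb - y) := by
      rw [hzdef]
      module
    have hexp : ‖xk - z‖ ^ 2 = ‖xk - y‖ ^ 2 - 2 * (l * t) + l ^ 2 * d ^ 2 := by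
      rw [hzsub, norm_sub_sq_real, real_inner_smul_right, norm_smul,
        Real.norm_eq_abs, abs_of_pos hl0, htdef, hddef]
      ring
    rw [hexp] at hp'
    have hW : fy - fz ≤ 1 / (2 * γ k) * (-(2 * (l * t)) + l ^ 2 * d ^ 2) := by
      have e : 1 / (2 * γ k) * (‖xk - y‖ ^ 2 - 2 * (l * t) + l ^ 2 * d ^ 2)
          = 1 / (2 * γ k) * ‖xk - y‖ ^ 2
            + 1 / (2 * γ k) * (-(2 * (l * t)) + l ^ 2 * d ^ 2) := by ring
      rw [e] at hp'
      linarith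
    have hmul := mul_le_mul_of_nonneg_left (hq'.trans' (le_refl _)) h2γ.le
    have hcanc : 2 * γ k * (1 / (2 * γ k) * (-(2 * (l * t)) + l ^ 2 * d ^ 2))
        = -(2 * (l * t)) + l ^ 2 * d ^ 2 := by
      field_simp
    have : 2 * γ k * (l * (1 - l) * r) ≤ 2 * γ k * (fy - fz) := by nlinarith [hq']
    calc 2 * γ k * (l * (1 - l) * r) ≤ 2 * γ k * (fy - fz) := this
      _ ≤ 2 * γ k * (1 / (2 * γ k) * (-(2 * (l * t)) + l ^ 2 * d ^ 2)) :=
          mul_le_mul_of_nonneg_left hW h2γ.le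
      _ = -(2 * (l * t)) + l ^ 2 * d ^ 2 := hcanc
  -- deduce γ k * r + t ≤ 0
  have hγrt : γ k * r + t ≤ 0 := by
    by_contra hcon
    push_neg at hcon
    have hKpos : 0 < 2 * γ k * r + d ^ 2 := by positivity
    set l0 := min (1/2 : ℝ) ((γ k * r + t) / (2 * γ k * r + d ^ 2)) with hl0def
    have hl0pos : 0 < l0 := lt_min (by norm_num) (div_pos hcon hKpos)
    have hl0lt : l0 < 1 := lt_of_le_of_lt (min_le_left _ _) (by norm_num)
    have hk2 := key l0 hl0pos hl0lt
    have hl0K : l0 * (2 * γ k * r + d ^ 2) ≤ γ k * r + t :=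
      (le_div_iff₀ hKpos).mp (min_le_right _ _)
    nlinarith [hk2, hl0K, hcon]
  -- conclude
  rw [hr]
  have hcoegoal : ((γ k : ℝ) : EReal) * ((r : ℝ) : EReal) + ((d ^ 2 : ℝ) : EReal)
      = (((γ k * r + d ^ 2 : ℝ)) : EReal) := by
    rw [← EReal.coe_mul, ← EReal.coe_add]
  rw [hcoegoal]
  apply EReal.coe_le_coe_iff.mpr
  have hin : (inner ℝ (xb - xk) (xb - y) : ℝ) = d ^ 2 - t := by
    have e : xb - xk = (xb - y) - (xk - y) := by abel
    rw [e, inner_sub_left, real_inner_self_eq_norm_sq, htdef, hddef]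
  have hcs : (inner ℝ (xb - xk) (xb - y) : ℝ) ≤ ‖xb - xk‖ * ‖xb - y‖ :=
    real_inner_le_norm _ _
  rw [hin, ← hddef] at hcs
  linarith
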